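/- Let μ be a real number. Then for all x ∈ (0,∞), the operator A² applied to the function x ↦ x^μ satisfies (A² (·^μ))(x) = d²⁺⁺(μ) x^{μ+2} + d²⁺(μ) x^{μ+1} + d²⁰(μ) x^{μ} + d²⁻(μ) x^{μ−1} + d²⁻⁻(μ) x^{μ−2}. -/

import Mathlib

noncomputable def qp (q r : ℝ) : ℂ := ((q ^ r : ℝ) : ℂ)

noncomputable def A2 (q h1 h2 h3 h4 l1 l2 l3 l4 : ℝ) (t1 t2 t3 t4 : ℂ) (g : ℝ → ℂ) (x : ℝ) : ℂ :=
  ((x : ℂ) ^ 2)⁻¹ * ((x : ℂ) - qp q (h1 + 1/2) * t1) * ((x : ℂ) - qp q (h2 + 1/2) * t2)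
      * ((x : ℂ) - qp q (h3 + 1/2) * t3) * ((x : ℂ) - qp q (h4 + 1/2) * t4) * g (x / q)
    + ((x : ℂ) ^ 2)⁻¹ * ((x : ℂ) - qp q (l1 - 1/2) * t1) * ((x : ℂ) - qp q (l2 - 1/2) * t2)
      * ((x : ℂ) - qp q (l3 - 1/2) * t3) * ((x : ℂ) - qp q (l4 - 1/2) * t4) * g (q * x)
    + (-(qp q (1/2) + qp q (-(1/2))) * (x : ℂ) ^ 2
        + ((qp q h1 + qp q l1) * t1 + (qp q h2 + qp q l2) * t2 + (qp q h3 + qp q l3) * t3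
            + (qp q h4 + qp q l4) * t4) * (x : ℂ)
        + qp q ((h1 + l1) / 2) * t1 * (qp q ((h2 + l2) / 2) * t2) * (qp q ((h3 + l3) / 2) * t3)
          * (qp q ((h4 + l4) / 2) * t4)
          * (-(qp q (1/2) + qp q (-(1/2))) * ((x : ℂ) ^ 2)⁻¹
              + (qp q (-h1) * t1⁻¹ + qp q (-l1) * t1⁻¹ + qp q (-h2) * t2⁻¹ + qp q (-l2) * t2⁻¹
                  + qp q (-h3) * t3⁻¹ + qp q (-l3) * t3⁻¹ + qp q (-h4) * t4⁻¹ + qp q (-l4) * t4⁻¹)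
                * (x : ℂ)⁻¹)) * g x

noncomputable def d2pp (q μ : ℝ) : ℂ :=
  qp q (-μ) + qp q μ - qp q (1/2) - qp q (-(1/2))

noncomputable def d2p (q h1 h2 h3 h4 l1 l2 l3 l4 : ℝ) (t1 t2 t3 t4 : ℂ) (μ : ℝ) : ℂ :=
  (qp q h1 + qp q l1 - qp q (h1 + 1/2 - μ) - qp q (l1 - 1/2 + μ)) * t1
    + (qp q h2 + qp q l2 - qp q (h2 + 1/2 - μ) - qp q (l2 - 1/2 + μ)) * t2
    + (qp q h3 + qp q l3 - qp q (h3 + 1/2 - μ) - qp q (l3 - 1/2 + μ)) * t3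
    + (qp q h4 + qp q l4 - qp q (h4 + 1/2 - μ) - qp q (l4 - 1/2 + μ)) * t4

noncomputable def d2z (q h1 h2 h3 h4 l1 l2 l3 l4 : ℝ) (t1 t2 t3 t4 : ℂ) (μ : ℝ) : ℂ :=
  (qp q (h1 + h2 + 1 - μ) + qp q (l1 + l2 - 1 + μ)) * t1 * t2
    + (qp q (h1 + h3 + 1 - μ) + qp q (l1 + l3 - 1 + μ)) * t1 * t3
    + (qp q (h1 + h4 + 1 - μ) + qp q (l1 + l4 - 1 + μ)) * t1 * t4
    + (qp q (h2 + h3 + 1 - μ) + qp q (l2 + l3 - 1 + μ)) * t2 * t3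
    + (qp q (h2 + h4 + 1 - μ) + qp q (l2 + l4 - 1 + μ)) * t2 * t4
    + (qp q (h3 + h4 + 1 - μ) + qp q (l3 + l4 - 1 + μ)) * t3 * t4

noncomputable def d2m (q h1 h2 h3 h4 l1 l2 l3 l4 : ℝ) (t1 t2 t3 t4 : ℂ) (μ : ℝ) : ℂ :=
  t1 * t2 * t3 * t4 *
    ((qp q ((h1 + h2 + h3 + h4 + l1 + l2 + l3 + l4) / 2) * (qp q (-h1) + qp q (-l1))
        - qp q (h1 + h2 + h3 + h4 + 3/2 - μ) * qp q (-h1)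
        - qp q (l1 + l2 + l3 + l4 - 3/2 + μ) * qp q (-l1)) * t1⁻¹
      + (qp q ((h1 + h2 + h3 + h4 + l1 + l2 + l3 + l4) / 2) * (qp q (-h2) + qp q (-l2))
        - qp q (h1 + h2 + h3 + h4 + 3/2 - μ) * qp q (-h2)
        - qp q (l1 + l2 + l3 + l4 - 3/2 + μ) * qp q (-l2)) * t2⁻¹
      + (qp q ((h1 + h2 + h3 + h4 + l1 + l2 + l3 + l4) / 2) * (qp q (-h3) + qp q (-l3))
        - qp q (h1 + h2 + h3 + h4 + 3/2 - μ) * qp q (-h3)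
        - qp q (l1 + l2 + l3 + l4 - 3/2 + μ) * qp q (-l3)) * t3⁻¹
      + (qp q ((h1 + h2 + h3 + h4 + l1 + l2 + l3 + l4) / 2) * (qp q (-h4) + qp q (-l4))
        - qp q (h1 + h2 + h3 + h4 + 3/2 - μ) * qp q (-h4)
        - qp q (l1 + l2 + l3 + l4 - 3/2 + μ) * qp q (-l4)) * t4⁻¹)

noncomputable def d2mm (q h1 h2 h3 h4 l1 l2 l3 l4 : ℝ) (t1 t2 t3 t4 : ℂ) (μ : ℝ) : ℂ :=
  (qp q (h1 + h2 + h3 + h4 + 2 - μ) + qp q (l1 + l2 + l3 + l4 - 2 + μ)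
      - qp q ((h1 + h2 + h3 + h4 + l1 + l2 + l3 + l4) / 2) * (qp q (1/2) + qp q (-(1/2))))
    * t1 * t2 * t3 * t4


section Aux
variable {q : ℝ}

lemma qp_add (hq : 0 < q) (a b : ℝ) : qp q (a + b) = qp q a * qp q b := by
  unfold qp; rw [Real.rpow_add hq]; push_cast; ring

lemma qp_neg (hq : 0 < q) (a : ℝ) : qp q (-a) = (qp q a)⁻¹ := by
  unfold qp; rw [Real.rpow_neg hq.le]; push_cast [Real.rpow_natCast]; simp

lemma qp_sub (hq : 0 < q) (a b : ℝ) : qp q (a - b) = qp q a * (qp q b)⁻¹ := by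
  rw [sub_eq_add_neg, qp_add hq, qp_neg hq]

lemma qp_ne (hq : 0 < q) (r : ℝ) : qp q r ≠ 0 := by
  unfold qp
  exact_mod_cast (Real.rpow_pos_of_pos hq r).ne'

lemma qp_one' (hq : 0 < q) : qp q 1 = qp q (1/2) * qp q (1/2) := by
  rw [← qp_add hq]; norm_num

lemma qp_threehalves (hq : 0 < q) : qp q (3/2) = qp q (1/2) * qp q (1/2) * qp q (1/2) := by
  rw [← qp_add hq, ← qp_add hq]; norm_num

lemma qp_two' (hq : 0 < q) : qp q 2 = qp q (1/2) * qp q (1/2) * qp q (1/2) * qp q (1/2) := by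
  rw [← qp_add hq, ← qp_add hq, ← qp_add hq]; norm_num

lemma qp_big (hq : 0 < q) (h1 h2 h3 h4 l1 l2 l3 l4 : ℝ) :
    qp q ((h1 + h2 + h3 + h4 + l1 + l2 + l3 + l4) / 2)
      = qp q ((h1 + l1)/2) * qp q ((h2 + l2)/2) * qp q ((h3 + l3)/2) * qp q ((h4 + l4)/2) := by
  rw [show (h1 + h2 + h3 + h4 + l1 + l2 + l3 + l4) / 2
      = (h1 + l1)/2 + (h2 + l2)/2 + (h3 + l3)/2 + (h4 + l4)/2 by ring,
    qp_add hq, qp_add hq, qp_add hq]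

end Aux


lemma expand4 (y u1 u2 u3 u4 : ℂ) (hy : y ≠ 0) :
    (y^2)⁻¹ * (y - u1) * (y - u2) * (y - u3) * (y - u4)
      = y^2 - (u1+u2+u3+u4)*y + (u1*u2+u1*u3+u1*u4+u2*u3+u2*u4+u3*u4)
        - (u2*u3*u4 + u1*u3*u4 + u1*u2*u4 + u1*u2*u3)*y⁻¹ + u1*u2*u3*u4*(y^2)⁻¹ := by
  field_simp
  ring

lemma tc (t1 t2 t3 t4 a1 a2 a3 a4 : ℂ) (h1 : t1 ≠ 0) (h2 : t2 ≠ 0) (h3 : t3 ≠ 0) (h4 : t4 ≠ 0) :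
    t1*t2*t3*t4*(a1*t1⁻¹ + a2*t2⁻¹ + a3*t3⁻¹ + a4*t4⁻¹)
      = a1*t2*t3*t4 + a2*t1*t3*t4 + a3*t1*t2*t4 + a4*t1*t2*t3 := by
  field_simp

set_option maxHeartbeats 4000000 in
theorem stmt6 (q h1 h2 h3 h4 l1 l2 l3 l4 : ℝ) (hq : 0 < q) (hq1 : q ≠ 1)
    (t1 t2 t3 t4 : ℂ) (ht1 : t1 ≠ 0) (ht2 : t2 ≠ 0) (ht3 : t3 ≠ 0) (ht4 : t4 ≠ 0) (μ : ℝ) :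
    ∀ x : ℝ, 0 < x →
      A2 q h1 h2 h3 h4 l1 l2 l3 l4 t1 t2 t3 t4 (fun y : ℝ => ((y ^ μ : ℝ) : ℂ)) x
        = d2pp q μ * ((x ^ (μ + 2) : ℝ) : ℂ)
          + d2p q h1 h2 h3 h4 l1 l2 l3 l4 t1 t2 t3 t4 μ * ((x ^ (μ + 1) : ℝ) : ℂ)
          + d2z q h1 h2 h3 h4 l1 l2 l3 l4 t1 t2 t3 t4 μ * ((x ^ μ : ℝ) : ℂ)
          + d2m q h1 h2 h3 h4 l1 l2 l3 l4 t1 t2 t3 t4 μ * ((x ^ (μ - 1) : ℝ) : ℂ)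
          + d2mm q h1 h2 h3 h4 l1 l2 l3 l4 t1 t2 t3 t4 μ * ((x ^ (μ - 2) : ℝ) : ℂ) := by
  intro x hx
  have hx0 : (x:ℂ) ≠ 0 := by exact_mod_cast hx.ne'
  have hxm : ((x ^ μ : ℝ) : ℂ) ≠ 0 := by
    exact_mod_cast (Real.rpow_pos_of_pos hx μ).ne'
  have hdiv : (((x / q) ^ μ : ℝ) : ℂ) = ((x ^ μ : ℝ) : ℂ) * (qp q μ)⁻¹ := by
    unfold qp
    rw [Real.div_rpow hx.le hq.le, div_eq_mul_inv]
    push_cast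
    ring
  have hmul : (((q * x) ^ μ : ℝ) : ℂ) = qp q μ * ((x ^ μ : ℝ) : ℂ) := by
    unfold qp
    rw [Real.mul_rpow hq.le hx.le]
    push_cast
    ring
  have hx2 : ((x ^ (μ + 2) : ℝ) : ℂ) = ((x ^ μ : ℝ) : ℂ) * (x:ℂ) ^ 2 := by
    rw [Real.rpow_add hx, show (2:ℝ) = ((2:ℕ):ℝ) by norm_num, Real.rpow_natCast]
    push_cast; ring
  have hx1 : ((x ^ (μ + 1) : ℝ) : ℂ) = ((x ^ μ : ℝ) : ℂ) * (x:ℂ) := by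
    rw [Real.rpow_add hx, Real.rpow_one]; push_cast; ring
  have hxm1 : ((x ^ (μ - 1) : ℝ) : ℂ) = ((x ^ μ : ℝ) : ℂ) * ((x:ℂ))⁻¹ := by
    rw [Real.rpow_sub hx, Real.rpow_one, div_eq_mul_inv]; push_cast; ring
  have hxm2 : ((x ^ (μ - 2) : ℝ) : ℂ) = ((x ^ μ : ℝ) : ℂ) * ((x:ℂ) ^ 2)⁻¹ := by
    rw [Real.rpow_sub hx, show (2:ℝ) = ((2:ℕ):ℝ) by norm_num, Real.rpow_natCast,
      div_eq_mul_inv]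
    push_cast; ring
  have n1 : qp q (1/2) ≠ 0 := qp_ne hq _
  have n2 : qp q μ ≠ 0 := qp_ne hq _
  have nh1 : qp q h1 ≠ 0 := qp_ne hq _
  have nh2 : qp q h2 ≠ 0 := qp_ne hq _
  have nh3 : qp q h3 ≠ 0 := qp_ne hq _
  have nh4 : qp q h4 ≠ 0 := qp_ne hq _
  have nl1 : qp q l1 ≠ 0 := qp_ne hq _
  have nl2 : qp q l2 ≠ 0 := qp_ne hq _
  have nl3 : qp q l3 ≠ 0 := qp_ne hq _
  have nl4 : qp q l4 ≠ 0 := qp_ne hq _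
  simp only [A2, d2pp, d2p, d2z, d2m, d2mm, hdiv, hmul, hx2, hx1, hxm1, hxm2,
    qp_add hq, qp_sub hq, qp_neg hq, qp_one' hq, qp_threehalves hq, qp_two' hq, qp_big hq]
  linear_combination
    (((x ^ μ : ℝ) : ℂ) * (qp q μ)⁻¹) * expand4 (x:ℂ) (qp q h1 * qp q (1/2) * t1) (qp q h2 * qp q (1/2) * t2)
      (qp q h3 * qp q (1/2) * t3) (qp q h4 * qp q (1/2) * t4) hx0
    + (qp q μ * ((x ^ μ : ℝ) : ℂ)) * expand4 (x:ℂ) (qp q l1 * (qp q (1/2))⁻¹ * t1)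
      (qp q l2 * (qp q (1/2))⁻¹ * t2) (qp q l3 * (qp q (1/2))⁻¹ * t3)
      (qp q l4 * (qp q (1/2))⁻¹ * t4) hx0
    + (qp q ((h1 + l1) / 2) * qp q ((h2 + l2) / 2) * qp q ((h3 + l3) / 2) * qp q ((h4 + l4) / 2) * ((x ^ μ : ℝ) : ℂ) * ((x:ℂ))⁻¹) * tc t1 t2 t3 t4 ((qp q h1)⁻¹ + (qp q l1)⁻¹) ((qp q h2)⁻¹ + (qp q l2)⁻¹) ((qp q h3)⁻¹ + (qp q l3)⁻¹) ((qp q h4)⁻¹ + (qp q l4)⁻¹) ht1 ht2 ht3 ht4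
    - (((x ^ μ : ℝ) : ℂ) * ((x:ℂ))⁻¹) * tc t1 t2 t3 t4
        (qp q ((h1 + l1) / 2) * qp q ((h2 + l2) / 2) * qp q ((h3 + l3) / 2) * qp q ((h4 + l4) / 2) * ((qp q h1)⁻¹ + (qp q l1)⁻¹) - qp q h1 * qp q h2 * qp q h3 * qp q h4 * qp q (1/2) * qp q (1/2) * qp q (1/2) * (qp q μ)⁻¹ * (qp q h1)⁻¹ - qp q l1 * qp q l2 * qp q l3 * qp q l4 * (qp q (1/2))⁻¹ * (qp q (1/2))⁻¹ * (qp q (1/2))⁻¹ * qp q μ * (qp q l1)⁻¹)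
        (qp q ((h1 + l1) / 2) * qp q ((h2 + l2) / 2) * qp q ((h3 + l3) / 2) * qp q ((h4 + l4) / 2) * ((qp q h2)⁻¹ + (qp q l2)⁻¹) - qp q h1 * qp q h2 * qp q h3 * qp q h4 * qp q (1/2) * qp q (1/2) * qp q (1/2) * (qp q μ)⁻¹ * (qp q h2)⁻¹ - qp q l1 * qp q l2 * qp q l3 * qp q l4 * (qp q (1/2))⁻¹ * (qp q (1/2))⁻¹ * (qp q (1/2))⁻¹ * qp q μ * (qp q l2)⁻¹)
        (qp q ((h1 + l1) / 2) * qp q ((h2 + l2) / 2) * qp q ((h3 + l3) / 2) * qp q ((h4 + l4) / 2) * ((qp q h3)⁻¹ + (qp q l3)⁻¹) - qp q h1 * qp q h2 * qp q h3 * qp q h4 * qp q (1/2) * qp q (1/2) * qp q (1/2) * (qp q μ)⁻¹ * (qp q h3)⁻¹ - qp q l1 * qp q l2 * qp q l3 * qp q l4 * (qp q (1/2))⁻¹ * (qp q (1/2))⁻¹ * (qp q (1/2))⁻¹ * qp q μ * (qp q l3)⁻¹)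
        (qp q ((h1 + l1) / 2) * qp q ((h2 + l2) / 2) * qp q ((h3 + l3) / 2) * qp q ((h4 + l4) / 2) * ((qp q h4)⁻¹ + (qp q l4)⁻¹) - qp q h1 * qp q h2 * qp q h3 * qp q h4 * qp q (1/2) * qp q (1/2) * qp q (1/2) * (qp q μ)⁻¹ * (qp q h4)⁻¹ - qp q l1 * qp q l2 * qp q l3 * qp q l4 * (qp q (1/2))⁻¹ * (qp q (1/2))⁻¹ * (qp q (1/2))⁻¹ * qp q μ * (qp q l4)⁻¹) ht1 ht2 ht3 ht4
    + (qp q h2 * qp q h3 * qp q h4 * qp q (1/2) * qp q (1/2) * qp q (1/2) * t2 * t3 * t4 * (qp q μ)⁻¹ * ((x ^ μ : ℝ) : ℂ) * ((x:ℂ))⁻¹) * (mul_inv_cancel₀ nh1)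
    + (qp q h1 * qp q h3 * qp q h4 * qp q (1/2) * qp q (1/2) * qp q (1/2) * t1 * t3 * t4 * (qp q μ)⁻¹ * ((x ^ μ : ℝ) : ℂ) * ((x:ℂ))⁻¹) * (mul_inv_cancel₀ nh2)
    + (qp q h1 * qp q h2 * qp q h4 * qp q (1/2) * qp q (1/2) * qp q (1/2) * t1 * t2 * t4 * (qp q μ)⁻¹ * ((x ^ μ : ℝ) : ℂ) * ((x:ℂ))⁻¹) * (mul_inv_cancel₀ nh3)
    + (qp q h1 * qp q h2 * qp q h3 * qp q (1/2) * qp q (1/2) * qp q (1/2) * t1 * t2 * t3 * (qp q μ)⁻¹ * ((x ^ μ : ℝ) : ℂ) * ((x:ℂ))⁻¹) * (mul_inv_cancel₀ nh4)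
    + (qp q l2 * qp q l3 * qp q l4 * (qp q (1/2))⁻¹ * (qp q (1/2))⁻¹ * (qp q (1/2))⁻¹ * t2 * t3 * t4 * qp q μ * ((x ^ μ : ℝ) : ℂ) * ((x:ℂ))⁻¹) * (mul_inv_cancel₀ nl1)
    + (qp q l1 * qp q l3 * qp q l4 * (qp q (1/2))⁻¹ * (qp q (1/2))⁻¹ * (qp q (1/2))⁻¹ * t1 * t3 * t4 * qp q μ * ((x ^ μ : ℝ) : ℂ) * ((x:ℂ))⁻¹) * (mul_inv_cancel₀ nl2)
    + (qp q l1 * qp q l2 * qp q l4 * (qp q (1/2))⁻¹ * (qp q (1/2))⁻¹ * (qp q (1/2))⁻¹ * t1 * t2 * t4 * qp q μ * ((x ^ μ : ℝ) : ℂ) * ((x:ℂ))⁻¹) * (mul_inv_cancel₀ nl3)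
    + (qp q l1 * qp q l2 * qp q l3 * (qp q (1/2))⁻¹ * (qp q (1/2))⁻¹ * (qp q (1/2))⁻¹ * t1 * t2 * t3 * qp q μ * ((x ^ μ : ℝ) : ℂ) * ((x:ℂ))⁻¹) * (mul_inv_cancel₀ nl4)
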